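/- Let k ≥ 3 and let d, D be positive integers with k ≤ dD, and let C_k and C_{k−1} be the associated transfer matrices (both defined with the same parameters d, D). For a permutation ρ ∈ S_k with ρ(k) = k, let ρ↓ ∈ S_{k−1} denote its restriction to a permutation of {1,…,k−1}. Then for every θ ∈ S_k with θ(k) = k and every τ ∈ S_k, one has ⟨τ|C_k|θ⟩ = δ_{k, τ(k)} · ⟨τ↓|C_{k−1}|θ↓⟩; in particular ⟨τ|C_k|θ⟩ = 0 whenever τ(k) ≠ k and θ(k) = k. -/

import Mathlib

open Equiv Matrix

/-- Number of cycles of a permutation, counting fixed points as 1-cycles. -/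
noncomputable def cyc {k : ℕ} (π : Equiv.Perm (Fin k)) : ℕ :=
  (k - π.cycleType.sum) + Multiset.card π.cycleType

/-- Gram matrix `G(q)_{στ} = q^{#(στ⁻¹)}`. -/
noncomputable def Gram (k q : ℕ) :
    Matrix (Equiv.Perm (Fin k)) (Equiv.Perm (Fin k)) ℝ :=
  Matrix.of fun σ τ => (q : ℝ) ^ cyc (σ * τ⁻¹)

/-- Weingarten matrix `W = G(q)⁻¹`, so that `Wg(στ⁻¹, q) = W σ τ`. -/
noncomputable def WgM (k q : ℕ) :
    Matrix (Equiv.Perm (Fin k)) (Equiv.Perm (Fin k)) ℝ :=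
  (Gram k q)⁻¹

/-- Transfer matrix `⟨τ|C_k|θ⟩ = Σ_σ Wg(στ⁻¹, dD) d^{#(σ)} D^{#(σθ⁻¹)}`. -/
noncomputable def Ck (k d D : ℕ) :
    Matrix (Equiv.Perm (Fin k)) (Equiv.Perm (Fin k)) ℝ :=
  Matrix.of fun τ θ =>
    ∑ σ : Equiv.Perm (Fin k),
      WgM k (d * D) σ τ * (d : ℝ) ^ cyc σ * (D : ℝ) ^ cyc (σ * θ⁻¹)

/-- Restriction of a permutation of `{1,…,n+1}` fixing the last element to a permutation
of `{1,…,n}` (implemented via removal of the last point). -/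
noncomputable def restrictLast {n : ℕ} (ρ : Equiv.Perm (Fin (n + 1))) : Equiv.Perm (Fin n) :=
  Equiv.removeNone (finSuccEquivLast.permCongr ρ)

section RemoveNone
variable {α : Type*}

lemma apply_some_of_none_eq_none (e : Perm (Option α)) (he : e none = none) (x : α) :
    e (some x) = some (Equiv.removeNone e x) := by
  rcases h : e (some x) with _ | y
  · exact absurd (e.injective (h.trans he.symm)) (by simp)
  · exact ((Equiv.removeNone_some e ⟨y, h⟩).trans h).symm

lemma removeNone_mul (e f : Perm (Option α)) (hf : f none = none) :
    Equiv.removeNone (e * f) = Equiv.removeNone e * Equiv.removeNone f := by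
  ext x
  apply Option.some_injective
  simp only [Perm.mul_apply]
  rcases h : e (some (Equiv.removeNone f x)) with _ | y
  · rw [Equiv.removeNone_none e h]
    rw [Equiv.removeNone_none (e * f)]
    · simp [Perm.mul_apply, hf]
    · simp only [Perm.mul_apply, apply_some_of_none_eq_none f hf x, h]
  · rw [Equiv.removeNone_some e ⟨y, h⟩, h]
    rw [Equiv.removeNone_some (e * f) ⟨y, ?_⟩]
    · simp only [Perm.mul_apply, apply_some_of_none_eq_none f hf x, h]
    · simp only [Perm.mul_apply, apply_some_of_none_eq_none f hf x, h]

lemma removeNone_one : Equiv.removeNone (1 : Perm (Option α)) = 1 := by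
  have : (1 : Perm (Option α)) = Equiv.optionCongr (1 : Perm α) := by
    ext x; cases x <;> simp
  rw [this, Equiv.removeNone_optionCongr]

lemma removeNone_inv (f : Perm (Option α)) (hf : f none = none) :
    Equiv.removeNone f⁻¹ = (Equiv.removeNone f)⁻¹ := by
  have h := removeNone_mul f⁻¹ f hf
  rw [inv_mul_cancel, removeNone_one] at h
  exact eq_inv_of_mul_eq_one_left h.symm

lemma optionCongr_removeNone (e : Perm (Option α)) (he : e none = none) :
    Equiv.optionCongr (Equiv.removeNone e) = e := by
  ext x
  cases x with
  | none => simp [he]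
  | some a => simp [← apply_some_of_none_eq_none e he a]

end RemoveNone

section RestrictLast
variable {n : ℕ}

lemma permCongr_mul {α β : Type*} (E : α ≃ β) (σ τ : Perm α) :
    E.permCongr (σ * τ) = E.permCongr σ * E.permCongr τ := by
  ext x; simp [Equiv.permCongr_apply, Perm.mul_apply]

lemma permCongr_none (ρ : Perm (Fin (n + 1))) :
    finSuccEquivLast.permCongr ρ none = finSuccEquivLast (ρ (Fin.last n)) := by
  simp [Equiv.permCongr_apply]

lemma permCongr_none_eq_none {ρ : Perm (Fin (n + 1))} (h : ρ (Fin.last n) = Fin.last n) :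
    finSuccEquivLast.permCongr ρ none = none := by
  simp [permCongr_none, h]

lemma permCongr_none_ne_none {ρ : Perm (Fin (n + 1))} (h : ρ (Fin.last n) ≠ Fin.last n) :
    finSuccEquivLast.permCongr ρ none ≠ none := by
  rw [permCongr_none]
  simpa [← finSuccEquivLast_last] using fun hh => h (finSuccEquivLast.injective hh)

lemma restrictLast_mul (σ τ : Perm (Fin (n + 1))) (hτ : τ (Fin.last n) = Fin.last n) :
    restrictLast (σ * τ) = restrictLast σ * restrictLast τ := by
  unfold restrictLast
  rw [_root_.permCongr_mul, removeNone_mul _ _ (permCongr_none_eq_none hτ)]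

lemma permCongr_one {α β : Type*} (E : α ≃ β) : E.permCongr (1 : Perm α) = 1 := by
  ext x; simp [Equiv.permCongr_apply]

lemma permCongr_inv {α β : Type*} (E : α ≃ β) (τ : Perm α) :
    E.permCongr τ⁻¹ = (E.permCongr τ)⁻¹ := by
  have h : E.permCongr τ⁻¹ * E.permCongr τ = 1 := by
    rw [← _root_.permCongr_mul, inv_mul_cancel, permCongr_one]
  exact eq_inv_of_mul_eq_one_left h

lemma restrictLast_inv (τ : Perm (Fin (n + 1))) (hτ : τ (Fin.last n) = Fin.last n) :
    restrictLast τ⁻¹ = (restrictLast τ)⁻¹ := by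
  unfold restrictLast
  rw [permCongr_inv, removeNone_inv _ (permCongr_none_eq_none hτ)]

/-- Extension of a permutation of `Fin n` to `Fin (n+1)` fixing the last element. -/
noncomputable def liftLast (τ : Perm (Fin n)) : Perm (Fin (n + 1)) :=
  finSuccEquivLast.permCongr.symm τ.optionCongr

lemma permCongr_liftLast (τ : Perm (Fin n)) :
    finSuccEquivLast.permCongr (liftLast τ) = τ.optionCongr :=
  finSuccEquivLast.permCongr.apply_symm_apply _

lemma liftLast_last (τ : Perm (Fin n)) : liftLast τ (Fin.last n) = Fin.last n := by
  have := congrArg (fun e => finSuccEquivLast.symm (e none)) (permCongr_liftLast τ)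
  simpa [Equiv.permCongr_apply] using this

lemma restrictLast_liftLast (τ : Perm (Fin n)) : restrictLast (liftLast τ) = τ := by
  rw [restrictLast, permCongr_liftLast, Equiv.removeNone_optionCongr]

lemma liftLast_restrictLast {τ : Perm (Fin (n + 1))} (hτ : τ (Fin.last n) = Fin.last n) :
    liftLast (restrictLast τ) = τ := by
  have : (restrictLast τ).optionCongr = finSuccEquivLast.permCongr τ :=
    optionCongr_removeNone _ (permCongr_none_eq_none hτ)
  rw [liftLast, this]
  exact finSuccEquivLast.permCongr.symm_apply_apply τ

/-- Equivalence between `Perm (Fin n)` and permutations of `Fin (n+1)` fixing the last point. -/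
noncomputable def liftLastEquiv (n : ℕ) :
    Perm (Fin n) ≃ {τ : Perm (Fin (n + 1)) // τ (Fin.last n) = Fin.last n} where
  toFun τ := ⟨liftLast τ, liftLast_last τ⟩
  invFun τ := restrictLast τ.1
  left_inv τ := restrictLast_liftLast τ
  right_inv τ := Subtype.ext (liftLast_restrictLast τ.2)

end RestrictLast

section Counting
variable {m q : ℕ}

lemma fixed_const {ρ : Perm (Fin m)} {j : Fin m → Fin q} (hj : ∀ a, j (ρ a) = j a)
    {a b : Fin m} (h : ρ.SameCycle a b) : j a = j b := by
  have key : ∀ i : ℕ, j ((ρ ^ i) a) = j a := by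
    intro i
    induction i with
    | zero => simp
    | succ i ih => rw [pow_succ', Perm.mul_apply, hj, ih]
  obtain ⟨i, _, rfl⟩ := h.exists_pow_eq'
  exact (key i).symm

lemma pt_spec (ρ : Perm (Fin m)) (c : ↥ρ.cycleFactorsFinset) :
    c.1.support.min' (Equiv.Perm.mem_cycleFactorsFinset_iff.1 c.2).1.nonempty_support
      ∈ c.1.support :=
  Finset.min'_mem _ _

noncomputable def fixedEquiv (ρ : Perm (Fin m)) (q : ℕ) :
    {j : Fin m → Fin q // ∀ a, j (ρ a) = j a} ≃
      ((↥(ρ.supportᶜ) ⊕ ↥ρ.cycleFactorsFinset) → Fin q) where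
  toFun j s :=
    match s with
    | Sum.inl a => j.1 a.1
    | Sum.inr c =>
        j.1 (c.1.support.min' (Equiv.Perm.mem_cycleFactorsFinset_iff.1 c.2).1.nonempty_support)
  invFun g :=
    ⟨fun a =>
      if h : a ∈ ρ.support then
        g (Sum.inr ⟨ρ.cycleOf a, Equiv.Perm.cycleOf_mem_cycleFactorsFinset_iff.2 h⟩)
      else g (Sum.inl ⟨a, Finset.mem_compl.2 h⟩), by
        intro a
        by_cases h : a ∈ ρ.support
        · have h' : ρ a ∈ ρ.support := Equiv.Perm.apply_mem_support.2 h
          simp only [dif_pos h, dif_pos h']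
          congr 2
          exact Subtype.ext (Equiv.Perm.cycleOf_self_apply ρ a)
        · have : ρ a = a := Equiv.Perm.notMem_support.1 h
          rw [this]⟩
  left_inv := by
    intro j
    apply Subtype.ext
    funext a
    by_cases h : a ∈ ρ.support
    · simp only [dif_pos h]
      set c : ↥ρ.cycleFactorsFinset :=
        ⟨ρ.cycleOf a, Equiv.Perm.cycleOf_mem_cycleFactorsFinset_iff.2 h⟩ with hc
      have hpt := pt_spec ρ c
      have hsc : ρ.SameCycle a _ := (Equiv.Perm.mem_support_cycleOf_iff.1 hpt).1
      exact (fixed_const j.2 hsc).symm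
    · simp only [dif_neg h]
  right_inv := by
    intro g
    funext s
    match s with
    | Sum.inl a =>
        have h : a.1 ∉ ρ.support := Finset.mem_compl.1 a.2
        simp only [dif_neg h]
    | Sum.inr c =>
        have hpt := pt_spec ρ c
        have hmem : _ ∈ ρ.support := Equiv.Perm.mem_cycleFactorsFinset_support_le c.2 hpt
        simp only [dif_pos hmem]
        congr 2
        exact Subtype.ext (Equiv.Perm.cycle_is_cycleOf hpt c.2).symm

lemma card_fixed (ρ : Perm (Fin m)) (q : ℕ) :
    Fintype.card {j : Fin m → Fin q // ∀ a, j (ρ a) = j a} = q ^ cyc ρ := by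
  rw [Fintype.card_congr (fixedEquiv ρ q), Fintype.card_fun, Fintype.card_fin,
    Fintype.card_sum, Fintype.card_coe, Fintype.card_coe]
  congr 1
  unfold cyc
  rw [Equiv.Perm.sum_cycleType, Equiv.Perm.cycleType, Multiset.card_map]
  rw [Finset.card_compl, Fintype.card_fin]
  rfl

end Counting

section Drop
variable {α : Type*} {q : ℕ}

noncomputable def fixedOptionEquivFix (e : Perm (Option α)) (he : e none = none) (q : ℕ) :
    {J : Option α → Fin q // ∀ x, J (e x) = J x} ≃
      ({J : α → Fin q // ∀ a, J (Equiv.removeNone e a) = J a} × Fin q) where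
  toFun J := (⟨fun a => J.1 (some a), fun a => by
      have h := J.2 (some a)
      rwa [apply_some_of_none_eq_none e he a] at h⟩, J.1 none)
  invFun P := ⟨fun x => Option.elim x P.2 P.1.1, by
      intro x
      cases x with
      | none => rw [he]
      | some a => rw [apply_some_of_none_eq_none e he a]; exact P.1.2 a⟩
  left_inv J := Subtype.ext (funext fun x => by cases x <;> rfl)
  right_inv P := by
    refine Prod.ext (Subtype.ext (funext fun a => rfl)) rfl
end Drop

section Drop2
variable {α : Type*} {q : ℕ}

noncomputable def fixedOptionEquivNonfix (e : Perm (Option α)) (he : e none ≠ none) (q : ℕ) :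
    {J : Option α → Fin q // ∀ x, J (e x) = J x} ≃
      {J : α → Fin q // ∀ a, J (Equiv.removeNone e a) = J a} where
  toFun J := ⟨fun a => J.1 (some a), by
      intro a
      rcases h : e (some a) with _ | y
      · have h1 : some (Equiv.removeNone e a) = e none := Equiv.removeNone_none e h
        have h2 : J.1 (e (some a)) = J.1 (some a) := J.2 (some a)
        rw [h] at h2
        have h3 : J.1 (e none) = J.1 none := J.2 none
        rw [← h1] at h3
        exact h3.trans h2
      · have h1 : some (Equiv.removeNone e a) = e (some a) := Equiv.removeNone_some e ⟨y, h⟩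
        show J.1 (some (Equiv.removeNone e a)) = J.1 (some a)
        rw [h1]
        exact J.2 (some a)⟩
  invFun J' :=
    ⟨fun x => Option.elim x (J'.1 ((e none).get (Option.ne_none_iff_isSome.1 he))) J'.1, by
      have hb : e none = some ((e none).get (Option.ne_none_iff_isSome.1 he)) :=
        (Option.some_get _).symm
      set b := (e none).get (Option.ne_none_iff_isSome.1 he) with hbdef
      intro x
      cases x with
      | none => rw [hb]; rfl
      | some a =>
          rcases h : e (some a) with _ | y
          · have h1 : some (Equiv.removeNone e a) = e none := Equiv.removeNone_none e h
            rw [hb] at h1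
            have hba : Equiv.removeNone e a = b := Option.some_injective _ h1
            simp only [Option.elim]
            rw [← hba]
            exact J'.2 a
          · have h1 : some (Equiv.removeNone e a) = e (some a) := Equiv.removeNone_some e ⟨y, h⟩
            rw [h] at h1
            have hya : Equiv.removeNone e a = y := Option.some_injective _ h1
            simp only [Option.elim]
            rw [← hya]
            exact J'.2 a⟩
  left_inv J := by
    apply Subtype.ext
    funext x
    cases x with
    | some a => rfl
    | none =>
        have hb : e none = some ((e none).get (Option.ne_none_iff_isSome.1 he)) :=
          (Option.some_get _).symm
        have h3 : J.1 (e none) = J.1 none := J.2 none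
        rw [hb] at h3
        exact h3
  right_inv J' := Subtype.ext (funext fun a => rfl)
end Drop2

section Transport
variable {n q : ℕ}

noncomputable def fixedFinOptionEquiv (ρ : Perm (Fin (n + 1))) (q : ℕ) :
    {j : Fin (n + 1) → Fin q // ∀ a, j (ρ a) = j a} ≃
      {J : Option (Fin n) → Fin q // ∀ x, J (finSuccEquivLast.permCongr ρ x) = J x} where
  toFun j := ⟨fun x => j.1 (finSuccEquivLast.symm x), fun x => by
      simp only [Equiv.permCongr_apply, Equiv.symm_apply_apply]
      exact j.2 _⟩
  invFun J := ⟨fun a => J.1 (finSuccEquivLast a), fun a => by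
      have h := J.2 (finSuccEquivLast a)
      simpa only [Equiv.permCongr_apply, Equiv.symm_apply_apply] using h⟩
  left_inv j := Subtype.ext (funext fun a => by simp)
  right_inv J := Subtype.ext (funext fun x => by simp)

lemma cyc_fix_last {ρ : Perm (Fin (n + 1))} (h : ρ (Fin.last n) = Fin.last n) :
    cyc ρ = cyc (restrictLast ρ) + 1 := by
  have h2 : (2 : ℕ) ^ cyc ρ = 2 ^ (cyc (restrictLast ρ) + 1) := by
    rw [← card_fixed ρ 2, Fintype.card_congr (fixedFinOptionEquiv ρ 2),
      Fintype.card_congr (fixedOptionEquivFix _ (permCongr_none_eq_none h) 2),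
      Fintype.card_prod, card_fixed, Fintype.card_fin, pow_succ]
    rfl
  exact Nat.pow_right_injective (le_refl 2) h2

lemma cyc_nonfix_last {ρ : Perm (Fin (n + 1))} (h : ρ (Fin.last n) ≠ Fin.last n) :
    cyc ρ = cyc (restrictLast ρ) := by
  have h2 : (2 : ℕ) ^ cyc ρ = 2 ^ cyc (restrictLast ρ) := by
    rw [← card_fixed ρ 2, Fintype.card_congr (fixedFinOptionEquiv ρ 2),
      Fintype.card_congr (fixedOptionEquivNonfix _ (permCongr_none_ne_none h) 2),
      card_fixed]
    rfl
  exact Nat.pow_right_injective (le_refl 2) h2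

lemma cyc_inv (ρ : Perm (Fin n)) : cyc ρ⁻¹ = cyc ρ := by
  unfold cyc
  rw [Equiv.Perm.cycleType_inv]

end Transport

section GramSec

noncomputable def Mmat (k q : ℕ) :
    Matrix (Perm (Fin k)) ((Fin k → Fin q) × (Fin k → Fin q)) ℝ :=
  Matrix.of fun σ p => if ∀ a, p.2 (σ a) = p.1 a then 1 else 0

lemma fixed_iff (k q : ℕ) (σ τ : Perm (Fin k)) (j : Fin k → Fin q) :
    ((fun a => j (σ a)) = fun a => j (τ a)) ↔ ∀ a, j ((σ * τ⁻¹) a) = j a := by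
  constructor
  · intro h a
    have := congrFun h (τ⁻¹ a)
    simpa [Perm.mul_apply] using this
  · intro h
    funext a
    have := h (τ a)
    simpa [Perm.mul_apply] using this

lemma gram_entry (k q : ℕ) (σ τ : Perm (Fin k)) :
    (Mmat k q * (Mmat k q)ᵀ) σ τ = (q : ℝ) ^ cyc (σ * τ⁻¹) := by
  have c1 : ∀ (i j : Fin k → Fin q) (π : Perm (Fin k)),
      (∀ a, j (π a) = i a) ↔ i = fun a => j (π a) := fun i j π =>
    ⟨fun h => funext fun a => (h a).symm, fun h a => by rw [h]⟩
  rw [Matrix.mul_apply]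
  have hterm : ∀ p : (Fin k → Fin q) × (Fin k → Fin q),
      Mmat k q σ p * (Mmat k q)ᵀ p τ =
        if p.1 = (fun a => p.2 (σ a)) then
          (if p.1 = (fun a => p.2 (τ a)) then (1 : ℝ) else 0) else 0 := by
    intro p
    simp only [Mmat, Matrix.transpose_apply, Matrix.of_apply]
    rw [if_congr (c1 p.1 p.2 σ) rfl rfl, if_congr (c1 p.1 p.2 τ) rfl rfl, ite_mul, one_mul,
      zero_mul]
  rw [Finset.sum_congr rfl (fun p _ => hterm p)]
  rw [Fintype.sum_prod_type_right]
  have hinner : ∀ j : Fin k → Fin q,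
      (∑ i : Fin k → Fin q, if i = (fun a => j (σ a)) then
          (if i = (fun a => j (τ a)) then (1 : ℝ) else 0) else 0) =
        if (∀ a, j ((σ * τ⁻¹) a) = j a) then (1 : ℝ) else 0 := by
    intro j
    rw [Finset.sum_ite_eq' Finset.univ (fun a => j (σ a))
      (fun i => if i = (fun a => j (τ a)) then (1 : ℝ) else 0)]
    simp only [Finset.mem_univ, if_true]
    rw [if_congr (fixed_iff k q σ τ j) rfl rfl]
  rw [Finset.sum_congr rfl (fun j _ => hinner j)]
  rw [Finset.sum_boole]
  rw [← Fintype.card_subtype]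
  rw [card_fixed (σ * τ⁻¹) q]
  push_cast
  ring

end GramSec

lemma gram'_eq_mul (k q : ℕ) : Gram k q = Mmat k q * (Mmat k q)ᵀ := by
  ext σ τ
  rw [gram_entry]
  rfl

lemma gram'_det_ne_zero {k q : ℕ} (h : k ≤ q) : (Gram k q).det ≠ 0 := by
  intro hdet
  obtain ⟨v, hv0, hv⟩ := Matrix.exists_mulVec_eq_zero_iff.2 hdet
  have hw : (Mmat k q)ᵀ *ᵥ v = 0 := by
    have h1 : v ⬝ᵥ (Gram k q *ᵥ v) = 0 := by rw [hv, dotProduct_zero]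
    rw [gram'_eq_mul, ← Matrix.mulVec_mulVec, Matrix.dotProduct_mulVec,
      ← Matrix.mulVec_transpose] at h1
    exact dotProduct_self_eq_zero.1 h1
  apply hv0
  funext σ₀
  have hinj : Function.Injective (Fin.castLE h) := Fin.castLE_injective h
  have key := congrFun hw ((Fin.castLE h : Fin k → Fin q), fun a => Fin.castLE h (σ₀⁻¹ a))
  have heval : ((Mmat k q)ᵀ *ᵥ v)
      ((Fin.castLE h : Fin k → Fin q), fun a => Fin.castLE h (σ₀⁻¹ a)) = v σ₀ := by
    rw [Matrix.mulVec]
    show (∑ σ : Perm (Fin k), (Mmat k q)ᵀ _ σ * v σ) = v σ₀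
    have hterm : ∀ σ : Perm (Fin k),
        (Mmat k q)ᵀ ((Fin.castLE h : Fin k → Fin q), fun a => Fin.castLE h (σ₀⁻¹ a)) σ * v σ =
          if σ = σ₀ then v σ else 0 := by
      intro σ
      simp only [Mmat, Matrix.transpose_apply, Matrix.of_apply]
      have hcond : (∀ a, Fin.castLE h (σ₀⁻¹ (σ a)) = Fin.castLE h a) ↔ σ = σ₀ := by
        constructor
        · intro hc
          apply Equiv.ext
          intro a
          have := hinj (hc a)
          have h2 := congrArg σ₀ this
          simpa using h2
        · rintro rfl
          intro a
          simp
      rw [if_congr hcond rfl rfl, ite_mul, one_mul, zero_mul]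
    rw [Finset.sum_congr rfl (fun σ _ => hterm σ)]
    exact Finset.sum_ite_eq' Finset.univ σ₀ v |>.trans (by simp)
  rw [key] at heval
  exact heval.symm

section Main

lemma gram'_symm (k q : ℕ) : (Gram k q)ᵀ = Gram k q := by
  ext σ τ
  show (q : ℝ) ^ cyc (τ * σ⁻¹) = (q : ℝ) ^ cyc (σ * τ⁻¹)
  rw [show τ * σ⁻¹ = (σ * τ⁻¹)⁻¹ by simp [_root_.mul_inv_rev], cyc_inv]

lemma gram'_inv_symm (k q : ℕ) (σ τ : Perm (Fin k)) :
    (Gram k q)⁻¹ σ τ = (Gram k q)⁻¹ τ σ := by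
  have h : ((Gram k q)⁻¹)ᵀ = (Gram k q)⁻¹ := by
    rw [Matrix.transpose_nonsing_inv, gram'_symm]
  conv_lhs => rw [← h]
  rw [Matrix.transpose_apply]

noncomputable def Bmat (k d D : ℕ) :
    Matrix (Perm (Fin k)) (Perm (Fin k)) ℝ :=
  Matrix.of fun σ θ => (d : ℝ) ^ cyc σ * (D : ℝ) ^ cyc (σ * θ⁻¹)

lemma Ck_eq (k d D : ℕ) : Ck k d D = (Gram k (d * D))⁻¹ * Bmat k d D := by
  ext τ θ
  rw [Matrix.mul_apply]
  show (∑ σ : Perm (Fin k), (Gram k (d * D))⁻¹ σ τ * (d : ℝ) ^ cyc σ *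
      (D : ℝ) ^ cyc (σ * θ⁻¹)) = _
  apply Finset.sum_congr rfl
  intro σ _
  rw [gram'_inv_symm]
  show _ = (Gram k (d*D))⁻¹ τ σ * ((d : ℝ) ^ cyc σ * (D : ℝ) ^ cyc (σ * θ⁻¹))
  ring

lemma gram_mul_Ck (k d D : ℕ) (h : k ≤ d * D) :
    Gram k (d * D) * Ck k d D = Bmat k d D := by
  rw [Ck_eq, ← Matrix.mul_assoc,
    Matrix.mul_nonsing_inv _ (isUnit_iff_ne_zero.2 (gram'_det_ne_zero h)), Matrix.one_mul]

lemma gram_Ck_entry (k d D : ℕ) (h : k ≤ d * D) (σ θ : Perm (Fin k)) :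
    (∑ τ : Perm (Fin k), ((d * D : ℕ) : ℝ) ^ cyc (σ * τ⁻¹) * Ck k d D τ θ) =
      (d : ℝ) ^ cyc σ * (D : ℝ) ^ cyc (σ * θ⁻¹) := by
  have h1 := congrFun (congrFun (gram_mul_Ck k d D h) σ) θ
  rw [Matrix.mul_apply] at h1
  exact h1

lemma inv_fix_last {n : ℕ} {f : Perm (Fin (n + 1))} (h : f (Fin.last n) = Fin.last n) :
    f⁻¹ (Fin.last n) = Fin.last n := by
  conv_lhs => rw [← h]
  exact Equiv.symm_apply_apply f _

lemma restrictLast_mul_inv {n : ℕ} (σ τ : Perm (Fin (n + 1)))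
    (hτ : τ (Fin.last n) = Fin.last n) :
    restrictLast (σ * τ⁻¹) = restrictLast σ * (restrictLast τ)⁻¹ := by
  rw [restrictLast_mul σ τ⁻¹ (inv_fix_last hτ), restrictLast_inv τ hτ]

lemma sum_fixLast {n : ℕ} (f : Perm (Fin (n + 1)) → ℝ) :
    (∑ τ : Perm (Fin (n + 1)), if τ (Fin.last n) = Fin.last n then f τ else 0) =
      ∑ τ' : Perm (Fin n), f (liftLast τ') := by
  rw [← Finset.sum_filter]
  have h1 : (∑ τ ∈ Finset.univ.filter
      (fun τ : Perm (Fin (n + 1)) => τ (Fin.last n) = Fin.last n), f τ) =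
      ∑ a : {τ : Perm (Fin (n + 1)) // τ (Fin.last n) = Fin.last n}, f a.1 :=
    Finset.sum_subtype _ (by simp) f
  rw [h1]
  exact Fintype.sum_equiv (liftLastEquiv n).symm _ _
    (fun a => congrArg f (liftLast_restrictLast a.2).symm)

end Main

theorem main' (n d D : ℕ) (hkdD : n + 1 ≤ d * D)
    (τ θ : Perm (Fin (n + 1))) (hθ : θ (Fin.last n) = Fin.last n) :
    Ck (n + 1) d D τ θ =
      if τ (Fin.last n) = Fin.last n then
        Ck n d D (restrictLast τ) (restrictLast θ) else 0 := by
  have hn' : n ≤ d * D := le_trans (Nat.le_succ n) hkdD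
  set u : Perm (Fin (n + 1)) → ℝ := fun ρ =>
    if ρ (Fin.last n) = Fin.last n then Ck n d D (restrictLast ρ) (restrictLast θ) else 0
    with hu
  set c : Perm (Fin (n + 1)) → ℝ := fun ρ => Ck (n + 1) d D ρ θ with hc
  have hGc : ∀ σ, (Gram (n + 1) (d * D) *ᵥ c) σ =
      (d : ℝ) ^ cyc σ * (D : ℝ) ^ cyc (σ * θ⁻¹) := by
    intro σ
    rw [← gram_Ck_entry (n + 1) d D hkdD σ θ]
    rfl
  have hGu : ∀ σ, (Gram (n + 1) (d * D) *ᵥ u) σ =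
      (d : ℝ) ^ cyc σ * (D : ℝ) ^ cyc (σ * θ⁻¹) := by
    intro σ
    have hstep : (Gram (n + 1) (d * D) *ᵥ u) σ =
        ∑ τ' : Perm (Fin n), ((d * D : ℕ) : ℝ) ^ cyc (σ * (liftLast τ')⁻¹) *
          Ck n d D τ' (restrictLast θ) := by
      have hterm : ∀ ρ : Perm (Fin (n + 1)),
          Gram (n + 1) (d * D) σ ρ * u ρ =
            (if ρ (Fin.last n) = Fin.last n then
              ((d * D : ℕ) : ℝ) ^ cyc (σ * ρ⁻¹) *
                Ck n d D (restrictLast ρ) (restrictLast θ)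
            else 0) := by
        intro ρ
        rw [hu]
        simp only [mul_ite, mul_zero]
        rfl
      show (∑ ρ, Gram (n + 1) (d * D) σ ρ * u ρ) = _
      rw [Finset.sum_congr rfl (fun ρ _ => hterm ρ)]
      rw [sum_fixLast (fun ρ => ((d * D : ℕ) : ℝ) ^ cyc (σ * ρ⁻¹) *
        Ck n d D (restrictLast ρ) (restrictLast θ))]
      apply Finset.sum_congr rfl
      intro τ' _
      rw [restrictLast_liftLast]
    rw [hstep]
    by_cases hσ : σ (Fin.last n) = Fin.last n
    · have hterm : ∀ τ' : Perm (Fin n),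
          ((d * D : ℕ) : ℝ) ^ cyc (σ * (liftLast τ')⁻¹) =
            ((d * D : ℕ) : ℝ) * ((d * D : ℕ) : ℝ) ^ cyc (restrictLast σ * τ'⁻¹) := by
        intro τ'
        have hfix : (σ * (liftLast τ')⁻¹) (Fin.last n) = Fin.last n := by
          rw [Perm.mul_apply, inv_fix_last (liftLast_last τ'), hσ]
        rw [cyc_fix_last hfix, restrictLast_mul_inv σ (liftLast τ') (liftLast_last τ'),
          restrictLast_liftLast, pow_succ]
        ring
      rw [Finset.sum_congr rfl (fun τ' _ => by rw [hterm τ'])]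
      have hfac : (∑ τ' : Perm (Fin n),
          (((d * D : ℕ) : ℝ) * ((d * D : ℕ) : ℝ) ^ cyc (restrictLast σ * τ'⁻¹)) *
            Ck n d D τ' (restrictLast θ)) =
          ((d * D : ℕ) : ℝ) * ∑ τ' : Perm (Fin n),
            ((d * D : ℕ) : ℝ) ^ cyc (restrictLast σ * τ'⁻¹) *
              Ck n d D τ' (restrictLast θ) := by
        rw [Finset.mul_sum]
        exact Finset.sum_congr rfl (fun τ' _ => by ring)
      rw [hfac, gram_Ck_entry n d D hn' (restrictLast σ) (restrictLast θ)]
      have h1 : cyc σ = cyc (restrictLast σ) + 1 := cyc_fix_last hσ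
      have h2 : cyc (σ * θ⁻¹) = cyc (restrictLast σ * (restrictLast θ)⁻¹) + 1 := by
        have hfix : (σ * θ⁻¹) (Fin.last n) = Fin.last n := by
          rw [Perm.mul_apply, inv_fix_last hθ, hσ]
        rw [cyc_fix_last hfix, restrictLast_mul_inv σ θ hθ]
      rw [h1, h2]
      push_cast
      ring
    · have hterm : ∀ τ' : Perm (Fin n),
          cyc (σ * (liftLast τ')⁻¹) = cyc (restrictLast σ * τ'⁻¹) := by
        intro τ'
        have hnf : (σ * (liftLast τ')⁻¹) (Fin.last n) ≠ Fin.last n := by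
          rw [Perm.mul_apply, inv_fix_last (liftLast_last τ')]
          exact hσ
        rw [cyc_nonfix_last hnf, restrictLast_mul_inv σ (liftLast τ') (liftLast_last τ'),
          restrictLast_liftLast]
      rw [Finset.sum_congr rfl (fun τ' _ => by rw [hterm τ'])]
      rw [gram_Ck_entry n d D hn' (restrictLast σ) (restrictLast θ)]
      have h1 : cyc σ = cyc (restrictLast σ) := cyc_nonfix_last hσ
      have h2 : cyc (σ * θ⁻¹) = cyc (restrictLast σ * (restrictLast θ)⁻¹) := by
        have hnf : (σ * θ⁻¹) (Fin.last n) ≠ Fin.last n := by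
          rw [Perm.mul_apply, inv_fix_last hθ]
          exact hσ
        rw [cyc_nonfix_last hnf, restrictLast_mul_inv σ θ hθ]
      rw [h1, h2]
  have hdet := gram'_det_ne_zero (k := n + 1) (q := d * D) hkdD
  have heq : Gram (n + 1) (d * D) *ᵥ u = Gram (n + 1) (d * D) *ᵥ c := by
    funext σ
    rw [hGu σ, hGc σ]
  have h2 := congrArg (fun w => (Gram (n + 1) (d * D))⁻¹ *ᵥ w) heq
  simp only [Matrix.mulVec_mulVec, Matrix.nonsing_inv_mul _ (isUnit_iff_ne_zero.2 hdet),
    Matrix.one_mulVec] at h2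
  exact (congrFun h2 τ).symm

/-- Block-triangular structure of the transfer matrix: for `θ` fixing the last point,
`⟨τ|C_k|θ⟩ = δ_{k,τ(k)} ⟨τ↓|C_{k-1}|θ↓⟩` (with `k = n + 1 ≥ 3`). -/
theorem Ck_block_triangular (n d D : ℕ) (hn : 2 ≤ n) (hd : 0 < d) (hD : 0 < D)
    (hkdD : n + 1 ≤ d * D) (τ θ : Equiv.Perm (Fin (n + 1)))
    (hθ : θ (Fin.last n) = Fin.last n) :
    Ck (n + 1) d D τ θ =
      if τ (Fin.last n) = Fin.last n then
        Ck n d D (restrictLast τ) (restrictLast θ)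
      else 0 :=
  main' n d D hkdD τ θ hθ
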